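/- arXiv:1004.2581 — 2 statements merged into one kernel-verified Lean document; each statement's English description precedes it below -/
import Mathlib

section
/- If X and Y are i.i.d. with bounded density f, then the kernel h(x,y,t) = 1_{|x−y| ≤ t} (used for Rousseeuw and Croux's Qₙ scale estimator) satisfies the uniform variation condition on ℝ: E[ sup_{‖(x,y)−(X,Y)‖≤ε, ‖(x',y')−(X,Y)‖≤ε} |h(x,y,t) − h(x',y',t)| ] ≤ Lε for some constant L depending only on sup f, uniformly in t and ε > 0. -/
open MeasureTheory ProbabilityTheory Real

lemma sub_mem_Icc_bound
    {Ω : Type*} [MeasureSpace Ω] [IsProbabilityMeasure (ℙ : Measure Ω)]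
    (X Y : Ω → ℝ) (hXm : Measurable X) (hYm : Measurable Y)
    (hindep : ProbabilityTheory.IndepFun X Y ℙ)
    (f : ℝ → ℝ) (M : ℝ) (hfM : ∀ x, f x ≤ M)
    (hX : Measure.map X ℙ
      = (volume : Measure ℝ).withDensity (fun x => ENNReal.ofReal (f x)))
    (hY : Measure.map Y ℙ = Measure.map X ℙ) (a b : ℝ) :
    ℙ {ω | X ω - Y ω ∈ Set.Icc a b} ≤ ENNReal.ofReal M * ENNReal.ofReal (b - a) := by
  have hpair : Measurable (fun ω => (X ω, Y ω)) := hXm.prodMk hYm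
  have hs : MeasurableSet {p : ℝ × ℝ | p.1 - p.2 ∈ Set.Icc a b} := by
    exact (measurable_fst.sub measurable_snd) measurableSet_Icc
  have h1 : ℙ {ω | X ω - Y ω ∈ Set.Icc a b}
      = Measure.map (fun ω => (X ω, Y ω)) ℙ {p : ℝ × ℝ | p.1 - p.2 ∈ Set.Icc a b} := by
    rw [Measure.map_apply hpair hs]
    rfl
  rw [h1, (ProbabilityTheory.indepFun_iff_map_prod_eq_prod_map_map hXm.aemeasurable
    hYm.aemeasurable).mp hindep, Measure.prod_apply hs]
  have hYbound : ∀ x : ℝ, Measure.map Y ℙ (Prod.mk x ⁻¹' {p : ℝ × ℝ | p.1 - p.2 ∈ Set.Icc a b})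
      ≤ ENNReal.ofReal M * ENNReal.ofReal (b - a) := by
    intro x
    have hset : (Prod.mk x ⁻¹' {p : ℝ × ℝ | p.1 - p.2 ∈ Set.Icc a b})
        = Set.Icc (x - b) (x - a) := by
      ext y
      simp only [Set.mem_preimage, Set.mem_setOf_eq, Set.mem_Icc]
      constructor <;> intro h <;> constructor <;> linarith [h.1, h.2]
    rw [hset, hY, hX, MeasureTheory.withDensity_apply _ measurableSet_Icc]
    calc ∫⁻ y in Set.Icc (x - b) (x - a), ENNReal.ofReal (f y)
        ≤ ∫⁻ _ in Set.Icc (x - b) (x - a), ENNReal.ofReal M := by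
          apply lintegral_mono
          intro y
          exact ENNReal.ofReal_le_ofReal (hfM y)
      _ = ENNReal.ofReal M * volume (Set.Icc (x - b) (x - a)) := by
          rw [MeasureTheory.setLIntegral_const]
      _ ≤ ENNReal.ofReal M * ENNReal.ofReal (b - a) := by
          rw [Real.volume_Icc]
          apply mul_le_mul_right
          apply ENNReal.ofReal_le_ofReal
          ring_nf
          exact le_refl _
  calc ∫⁻ x, Measure.map Y ℙ (Prod.mk x ⁻¹' {p : ℝ × ℝ | p.1 - p.2 ∈ Set.Icc a b})
        ∂(Measure.map X ℙ)
      ≤ ∫⁻ _, ENNReal.ofReal M * ENNReal.ofReal (b - a) ∂(Measure.map X ℙ) :=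
        lintegral_mono hYbound
    _ = ENNReal.ofReal M * ENNReal.ofReal (b - a) := by
        have : IsProbabilityMeasure (Measure.map X ℙ) := Measure.isProbabilityMeasure_map hXm.aemeasurable
        simp [lintegral_const]

/-- For i.i.d. `X, Y` with density bounded by `M`, the kernel
`h(x,y,t) = 1_{|x−y| ≤ t}` of the `Qₙ` scale estimator satisfies the uniform variation
condition on ℝ with a constant `L` depending only on `M`. -/
theorem qn_kernel_variation
    {Ω : Type*} [MeasureSpace Ω] [IsProbabilityMeasure (ℙ : Measure Ω)]
    (X Y : Ω → ℝ) (hXm : Measurable X) (hYm : Measurable Y)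
    (hindep : ProbabilityTheory.IndepFun X Y ℙ)
    (f : ℝ → ℝ) (M : ℝ) (hf0 : ∀ x, 0 ≤ f x) (hfM : ∀ x, f x ≤ M)
    (hX : Measure.map X ℙ
      = (volume : Measure ℝ).withDensity (fun x => ENNReal.ofReal (f x)))
    (hY : Measure.map Y ℙ = Measure.map X ℙ) :
    ∃ L : ℝ, 0 ≤ L ∧
      ∀ (t : ℝ), ∀ ε > (0 : ℝ),
        ∫ ω, (⨆ q ∈ {q : ℝ × ℝ | Real.sqrt ((q.1 - X ω) ^ 2 + (q.2 - Y ω) ^ 2) ≤ ε},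
          ⨆ q' ∈ {q' : ℝ × ℝ | Real.sqrt ((q'.1 - X ω) ^ 2 + (q'.2 - Y ω) ^ 2) ≤ ε},
          |(if |q.1 - q.2| ≤ t then (1 : ℝ) else 0)
            - (if |q'.1 - q'.2| ≤ t then (1 : ℝ) else 0)|) ∂ℙ
        ≤ L * ε := by
  have hM0 : 0 ≤ M := le_trans (hf0 0) (hfM 0)
  refine ⟨8 * M, by positivity, ?_⟩
  intro t ε hε
  set A : Set Ω := {ω | |X ω - Y ω| ∈ Set.Icc (t - 2*ε) (t + 2*ε)} with hA_def
  have hAmeas : MeasurableSet A := by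
    exact ((hXm.sub hYm).abs) measurableSet_Icc
  -- coordinate bound
  have coord : ∀ (ω : Ω) (q : ℝ × ℝ),
      Real.sqrt ((q.1 - X ω) ^ 2 + (q.2 - Y ω) ^ 2) ≤ ε →
      |q.1 - X ω| ≤ ε ∧ |q.2 - Y ω| ≤ ε := by
    intro ω q hq
    constructor
    · calc |q.1 - X ω| = Real.sqrt ((q.1 - X ω) ^ 2) := (Real.sqrt_sq_eq_abs _).symm
        _ ≤ Real.sqrt ((q.1 - X ω) ^ 2 + (q.2 - Y ω) ^ 2) :=
            Real.sqrt_le_sqrt (by nlinarith [sq_nonneg (q.2 - Y ω)])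
        _ ≤ ε := hq
    · calc |q.2 - Y ω| = Real.sqrt ((q.2 - Y ω) ^ 2) := (Real.sqrt_sq_eq_abs _).symm
        _ ≤ Real.sqrt ((q.1 - X ω) ^ 2 + (q.2 - Y ω) ^ 2) :=
            Real.sqrt_le_sqrt (by nlinarith [sq_nonneg (q.1 - X ω)])
        _ ≤ ε := hq
  have close : ∀ (ω : Ω) (q : ℝ × ℝ),
      Real.sqrt ((q.1 - X ω) ^ 2 + (q.2 - Y ω) ^ 2) ≤ ε →
      abs (|q.1 - q.2| - |X ω - Y ω|) ≤ 2 * ε := by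
    intro ω q hq
    obtain ⟨h1, h2⟩ := coord ω q hq
    have : |(q.1 - q.2) - (X ω - Y ω)| ≤ 2 * ε := by
      calc |(q.1 - q.2) - (X ω - Y ω)| = |(q.1 - X ω) - (q.2 - Y ω)| := by ring_nf
        _ ≤ |q.1 - X ω| + |q.2 - Y ω| := abs_sub _ _
        _ ≤ 2 * ε := by linarith
    calc abs (|q.1 - q.2| - |X ω - Y ω|) ≤ |(q.1 - q.2) - (X ω - Y ω)| :=
        abs_abs_sub_abs_le_abs_sub _ _
      _ ≤ 2 * ε := this
  -- pointwise bound: sup ≤ indicator of A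
  have hpt : ∀ ω, (⨆ q ∈ {q : ℝ × ℝ | Real.sqrt ((q.1 - X ω) ^ 2 + (q.2 - Y ω) ^ 2) ≤ ε},
          ⨆ q' ∈ {q' : ℝ × ℝ | Real.sqrt ((q'.1 - X ω) ^ 2 + (q'.2 - Y ω) ^ 2) ≤ ε},
          |(if |q.1 - q.2| ≤ t then (1 : ℝ) else 0)
            - (if |q'.1 - q'.2| ≤ t then (1 : ℝ) else 0)|)
        ≤ A.indicator (fun _ => (1:ℝ)) ω := by
    intro ω
    by_cases hωA : ω ∈ A
    · rw [Set.indicator_of_mem hωA]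
      refine Real.iSup_le (fun q => Real.iSup_le (fun hq => Real.iSup_le (fun q' =>
        Real.iSup_le (fun hq' => ?_) one_pos.le) one_pos.le) one_pos.le) one_pos.le
      have : ∀ u v : ℝ, |(if |u| ≤ t then (1:ℝ) else 0) - (if |v| ≤ t then (1:ℝ) else 0)| ≤ 1 := by
        intro u v
        split_ifs <;> simp
      exact this _ _
    · rw [Set.indicator_of_notMem hωA]
      have hcase : |X ω - Y ω| < t - 2*ε ∨ t + 2*ε < |X ω - Y ω| := by
        simp only [hA_def, Set.mem_setOf_eq, Set.mem_Icc, not_and_or, not_le] at hωA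
        tauto
      have hval : ∀ q : ℝ × ℝ, Real.sqrt ((q.1 - X ω) ^ 2 + (q.2 - Y ω) ^ 2) ≤ ε →
          (if |q.1 - q.2| ≤ t then (1:ℝ) else 0)
            = (if |X ω - Y ω| < t - 2*ε then (1:ℝ) else 0) := by
        intro q hq
        have hc := close ω q hq
        rcases hcase with h | h
        · rw [if_pos h, if_pos]
          have := abs_le.mp hc
          linarith [this.1, this.2]
        · rw [if_neg (by linarith : ¬ (|X ω - Y ω| < t - 2*ε)), if_neg]
          push_neg
          have := abs_le.mp hc
          linarith [this.1, this.2]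
      refine Real.iSup_le (fun q => Real.iSup_le (fun hq => Real.iSup_le (fun q' =>
        Real.iSup_le (fun hq' => ?_) le_rfl) le_rfl) le_rfl) le_rfl
      rw [hval q hq, hval q' hq', sub_self, abs_zero]
  have hnonneg : ∀ ω, 0 ≤ (⨆ q ∈ {q : ℝ × ℝ | Real.sqrt ((q.1 - X ω) ^ 2 + (q.2 - Y ω) ^ 2) ≤ ε},
          ⨆ q' ∈ {q' : ℝ × ℝ | Real.sqrt ((q'.1 - X ω) ^ 2 + (q'.2 - Y ω) ^ 2) ≤ ε},
          |(if |q.1 - q.2| ≤ t then (1 : ℝ) else 0)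
            - (if |q'.1 - q'.2| ≤ t then (1 : ℝ) else 0)|) := by
    intro ω
    refine Real.iSup_nonneg (fun q => Real.iSup_nonneg (fun hq => Real.iSup_nonneg (fun q' =>
      Real.iSup_nonneg (fun hq' => abs_nonneg _))))
  have hInd : Integrable (A.indicator (fun _ => (1:ℝ))) ℙ := by
    exact (integrable_const (1:ℝ)).indicator hAmeas
  have hmono := integral_mono_of_nonneg (Filter.Eventually.of_forall hnonneg) hInd
    (Filter.Eventually.of_forall hpt)
  have hIndval : ∫ ω, A.indicator (fun _ => (1:ℝ)) ω ∂ℙ = (ℙ A).toReal := by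
    rw [MeasureTheory.integral_indicator_const (1:ℝ) hAmeas]
    simp [Measure.real]
  -- measure bound
  have hsubset : A ⊆ {ω | X ω - Y ω ∈ Set.Icc (t - 2*ε) (t + 2*ε)}
      ∪ {ω | X ω - Y ω ∈ Set.Icc (-(t + 2*ε)) (-(t - 2*ε))} := by
    intro ω hω
    simp only [hA_def, Set.mem_setOf_eq, Set.mem_Icc] at hω
    rcases le_or_gt 0 (X ω - Y ω) with h | h
    · left
      rw [abs_of_nonneg h] at hω
      exact hω
    · right
      rw [abs_of_neg h] at hω
      simp only [Set.mem_setOf_eq, Set.mem_Icc]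
      constructor <;> linarith [hω.1, hω.2]
  have hPA : ℙ A ≤ ENNReal.ofReal (8 * M * ε) := by
    calc ℙ A ≤ ℙ ({ω | X ω - Y ω ∈ Set.Icc (t - 2*ε) (t + 2*ε)}
          ∪ {ω | X ω - Y ω ∈ Set.Icc (-(t + 2*ε)) (-(t - 2*ε))}) := measure_mono hsubset
      _ ≤ ℙ {ω | X ω - Y ω ∈ Set.Icc (t - 2*ε) (t + 2*ε)}
          + ℙ {ω | X ω - Y ω ∈ Set.Icc (-(t + 2*ε)) (-(t - 2*ε))} := measure_union_le _ _
      _ ≤ ENNReal.ofReal M * ENNReal.ofReal ((t + 2*ε) - (t - 2*ε))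
          + ENNReal.ofReal M * ENNReal.ofReal ((-(t - 2*ε)) - (-(t + 2*ε))) := by
          gcongr
          · exact sub_mem_Icc_bound X Y hXm hYm hindep f M hfM hX hY _ _
          · exact sub_mem_Icc_bound X Y hXm hYm hindep f M hfM hX hY _ _
      _ = ENNReal.ofReal (8 * M * ε) := by
          have h4 : (0:ℝ) ≤ M * (4*ε) := by positivity
          rw [show (t + 2*ε) - (t - 2*ε) = 4*ε by ring, show (-(t - 2*ε)) - (-(t + 2*ε)) = 4*ε by ring]
          rw [← ENNReal.ofReal_mul hM0, ← ENNReal.ofReal_add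
            h4 h4]
          congr 1
          ring
  have htoReal : (ℙ A).toReal ≤ 8 * M * ε := by
    refine ENNReal.toReal_le_of_le_ofReal (by positivity) hPA
  calc _ ≤ ∫ ω, A.indicator (fun _ => (1:ℝ)) ω ∂ℙ := hmono
    _ = (ℙ A).toReal := hIndval
    _ ≤ 8 * M * ε := htoReal
end

section
/- Let Y₀, Y₁, … be stationary, bounded, centered random variables from a strongly mixing sequence with α(n) = O(n^{−β}), β > 3. Then for all i, j, k ≥ 1: |E[Y₀ Y_i Y_{i+j} Y_{i+j+k}]| ≤ C α^{1/β}(i) α^{1/β}(k) (E|Y₁|)^{(2β−2)/β} + C α^{3/β}(max{i,j,k}) (E|Y₁|)^{(β−3)/β}, for a constant C depending only on the uniform bound and β. -/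
open MeasureTheory ProbabilityTheory Real Filter Asymptotics

/-- The strong mixing (α-mixing) coefficients of a real-valued process. -/
noncomputable def alphaMix {Ω : Type*} [MeasureSpace Ω] (X : ℕ → Ω → ℝ) (k : ℕ) : ℝ :=
  sSup {r : ℝ | ∃ (n : ℕ) (A B : Set Ω),
    MeasurableSet[⨆ i ∈ Set.Icc 1 n, MeasurableSpace.comap (X i) inferInstance] A ∧
    MeasurableSet[⨆ i ∈ Set.Ici (n + k), MeasurableSpace.comap (X i) inferInstance] B ∧
    r = |((ℙ : Measure Ω) (A ∩ B)).toReal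
        - ((ℙ : Measure Ω) A).toReal * ((ℙ : Measure Ω) B).toReal|}

/-- Stationarity of a real-valued process: shift invariance of the law of the whole path. -/
def Stationary {Ω : Type*} [MeasureSpace Ω] (X : ℕ → Ω → ℝ) : Prop :=
  ∀ k : ℕ, Measure.map (fun ω (i : ℕ) => X (i + k) ω) (ℙ : Measure Ω)
    = Measure.map (fun ω (i : ℕ) => X i ω) (ℙ : Measure Ω)

section Helpers

variable {Ω : Type*} [MeasureSpace Ω] [IsProbabilityMeasure (ℙ : Measure Ω)]

lemma prob_toReal_le_one (S : Set Ω) : ((ℙ : Measure Ω) S).toReal ≤ 1 := by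
  have h1 : ((ℙ : Measure Ω) S) ≤ 1 := prob_le_one
  have := ENNReal.toReal_mono (by simp : (1:ENNReal) ≠ ⊤) h1
  simpa using this

lemma alphaSet_bddAbove (X : ℕ → Ω → ℝ) (k : ℕ) :
    BddAbove {r : ℝ | ∃ (n : ℕ) (A B : Set Ω),
    MeasurableSet[⨆ i ∈ Set.Icc 1 n, MeasurableSpace.comap (X i) inferInstance] A ∧
    MeasurableSet[⨆ i ∈ Set.Ici (n + k), MeasurableSpace.comap (X i) inferInstance] B ∧
    r = |((ℙ : Measure Ω) (A ∩ B)).toReal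
        - ((ℙ : Measure Ω) A).toReal * ((ℙ : Measure Ω) B).toReal|} := by
  refine ⟨1, ?_⟩
  rintro r ⟨n, A, B, -, -, rfl⟩
  have h1 := prob_toReal_le_one (A ∩ B)
  have h2 := prob_toReal_le_one A
  have h3 := prob_toReal_le_one B
  have h4 : (0:ℝ) ≤ ((ℙ : Measure Ω) (A ∩ B)).toReal := ENNReal.toReal_nonneg
  have h5 : (0:ℝ) ≤ ((ℙ : Measure Ω) A).toReal := ENNReal.toReal_nonneg
  have h6 : (0:ℝ) ≤ ((ℙ : Measure Ω) B).toReal := ENNReal.toReal_nonneg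
  rw [abs_le]
  constructor <;> nlinarith

lemma abs_cov_le_alphaMix (X : ℕ → Ω → ℝ) (k n : ℕ) {A B : Set Ω}
    (hA : MeasurableSet[⨆ i ∈ Set.Icc 1 n, MeasurableSpace.comap (X i) inferInstance] A)
    (hB : MeasurableSet[⨆ i ∈ Set.Ici (n + k), MeasurableSpace.comap (X i) inferInstance] B) :
    |((ℙ : Measure Ω) (A ∩ B)).toReal
      - ((ℙ : Measure Ω) A).toReal * ((ℙ : Measure Ω) B).toReal| ≤ alphaMix X k :=
  le_csSup (alphaSet_bddAbove X k) ⟨n, A, B, hA, hB, rfl⟩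

lemma alphaMix_nonneg (X : ℕ → Ω → ℝ) (k : ℕ) : 0 ≤ alphaMix X k := by
  have h := abs_cov_le_alphaMix (Ω := Ω) X k 0 (A := ∅) (B := ∅)
    (@MeasurableSet.empty Ω (⨆ i ∈ Set.Icc 1 0, MeasurableSpace.comap (X i) inferInstance))
    (@MeasurableSet.empty Ω (⨆ i ∈ Set.Ici (0 + k), MeasurableSpace.comap (X i) inferInstance))
  simpa using h

end Helpers

lemma bounded_integrable {Ω' : Type*} [m0' : MeasurableSpace Ω'] {μ : Measure Ω'}
    [IsFiniteMeasure μ] {f : Ω' → ℝ} (hf : Measurable f) {Kf : ℝ} (hb : ∀ ω, |f ω| ≤ Kf) :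
    Integrable f μ :=
  (integrable_const Kf).mono' hf.aestronglyMeasurable (ae_of_all _ fun ω => by
    simpa [Real.norm_eq_abs] using hb ω)


section Cov

/-- Ibragimov-type covariance inequality for bounded variables measurable w.r.t. the
past/future σ-algebras appearing in `alphaMix`. -/
lemma cov_bound_gen {Ω : Type*} [m0 : MeasurableSpace Ω] (μ : Measure Ω)
    [IsProbabilityMeasure μ] (mA mB : MeasurableSpace Ω)
    (hmA : mA ≤ m0) (hmB : mB ≤ m0) (α : ℝ)
    (hα : ∀ A B : Set Ω, MeasurableSet[mA] A → MeasurableSet[mB] B →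
      |(μ (A ∩ B)).toReal - (μ A).toReal * (μ B).toReal| ≤ α)
    (U V : Ω → ℝ) (KU KV : ℝ)
    (hU : Measurable[mA] U) (hV : Measurable[mB] V)
    (hUb : ∀ ω, |U ω| ≤ KU) (hVb : ∀ ω, |V ω| ≤ KV) :
    |(∫ ω, U ω * V ω ∂μ) - (∫ ω, U ω ∂μ) * ∫ ω, V ω ∂μ|
      ≤ 4 * KU * KV * α := by
  have hΩ : Nonempty Ω := by
    by_contra h
    rw [not_nonempty_iff] at h
    have h1 : μ Set.univ = 1 := measure_univ
    rw [Set.univ_eq_empty_iff.mpr h, measure_empty] at h1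
    exact zero_ne_one h1
  obtain ⟨ω₀⟩ := hΩ
  have hKU : 0 ≤ KU := (abs_nonneg _).trans (hUb ω₀)
  have hKV : 0 ≤ KV := (abs_nonneg _).trans (hVb ω₀)
  have hUm : Measurable[m0] U := hU.mono hmA le_rfl
  have hVm : Measurable[m0] V := hV.mono hmB le_rfl
  have hUint : Integrable U μ := bounded_integrable (m0' := m0) hUm hUb
  have hVint : Integrable V μ := bounded_integrable (m0' := m0) hVm hVb
  set c := ∫ ω, V ω ∂μ with hc
  set V' := fun ω => V ω - c with hV'
  have hV'm : Measurable[m0] V' := hVm.sub measurable_const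
  have hV'b : ∀ ω, |V' ω| ≤ KV + |c| := fun ω => by
    calc |V' ω| = |V ω - c| := rfl
      _ ≤ |V ω| + |c| := abs_sub _ _
      _ ≤ KV + |c| := by linarith [hVb ω]
  have hV'int : Integrable V' μ := hVint.sub (integrable_const c)
  -- step A : ∫ U * V' = ∫ U * W with W the conditional expectation of V' on mA
  set W := μ[V'|mA] with hW
  have hWsm : StronglyMeasurable[mA] W := stronglyMeasurable_condExp
  have hWint : Integrable W μ := integrable_condExp
  have hUV'int : Integrable (U * V') μ := by
    refine bounded_integrable (m0' := m0) (hUm.mul hV'm) (Kf := KU * (KV + |c|)) fun ω => ?_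
    calc |U ω * V' ω| = |U ω| * |V' ω| := abs_mul _ _
      _ ≤ KU * (KV + |c|) :=
        mul_le_mul (hUb ω) (hV'b ω) (abs_nonneg _) hKU
  have hstepA : ∫ ω, U ω * V' ω ∂μ = ∫ ω, U ω * W ω ∂μ := by
    have h1 : μ[U * V'|mA] =ᵐ[μ] U * W :=
      condExp_mul_of_stronglyMeasurable_left hU.stronglyMeasurable hUV'int hV'int
    calc ∫ ω, U ω * V' ω ∂μ = ∫ ω, (U * V') ω ∂μ := rfl
      _ = ∫ ω, (μ[U * V'|mA]) ω ∂μ := (integral_condExp hmA).symm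
      _ = ∫ ω, (U * W) ω ∂μ := integral_congr_ae h1
      _ = ∫ ω, U ω * W ω ∂μ := rfl
  -- the sign function ξ of W
  set Aset := {ω | 0 ≤ W ω} with hAset
  have hAsetm : MeasurableSet[mA] Aset := measurableSet_le measurable_const hWsm.measurable
  set ξ := fun ω => if ω ∈ Aset then (1:ℝ) else -1 with hξ
  have hξmA : Measurable[mA] ξ := Measurable.ite hAsetm measurable_const measurable_const
  have hξm : Measurable[m0] ξ := hξmA.mono hmA le_rfl
  have hξb : ∀ ω, |ξ ω| ≤ 1 := fun ω => by
    by_cases h : ω ∈ Aset <;> simp [hξ, h]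
  have hξW : ∀ ω, ξ ω * W ω = |W ω| := fun ω => by
    by_cases h : ω ∈ Aset
    · simp only [hξ, if_pos h]
      rw [one_mul, abs_of_nonneg h]
    · simp only [hξ, if_neg h]
      have h' : W ω < 0 := lt_of_not_ge h
      rw [abs_of_neg h']; ring
  -- step B : |∫ U W| ≤ KU * ∫ ξ W
  have hUWint : Integrable (fun ω => U ω * W ω) μ := hWint.bdd_mul hUm.aestronglyMeasurable
    (c := KU) (Filter.Eventually.of_forall fun ω => by simpa [Real.norm_eq_abs] using hUb ω)
  have hξWint : Integrable (fun ω => ξ ω * W ω) μ := hWint.bdd_mul hξm.aestronglyMeasurable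
    (c := 1) (Filter.Eventually.of_forall fun ω => by simpa [Real.norm_eq_abs] using hξb ω)
  have hstepB : |∫ ω, U ω * W ω ∂μ| ≤ KU * ∫ ω, ξ ω * W ω ∂μ := by
    have h1 : |∫ ω, U ω * W ω ∂μ| ≤ ∫ ω, |U ω * W ω| ∂μ := by
      simpa only [Real.norm_eq_abs] using norm_integral_le_integral_norm (fun ω => U ω * W ω) (μ := μ)
    have h2 : ∫ ω, |U ω * W ω| ∂μ ≤ ∫ ω, KU * |W ω| ∂μ := by
      refine integral_mono hUWint.abs (hWint.abs.const_mul KU) fun ω => ?_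
      rw [abs_mul]
      exact mul_le_mul_of_nonneg_right (hUb ω) (abs_nonneg _)
    have h3 : ∫ ω, KU * |W ω| ∂μ = KU * ∫ ω, |W ω| ∂μ := integral_const_mul KU _
    have h4 : ∫ ω, |W ω| ∂μ = ∫ ω, ξ ω * W ω ∂μ :=
      integral_congr_ae (ae_of_all _ fun ω => (hξW ω).symm)
    calc |∫ ω, U ω * W ω ∂μ| ≤ ∫ ω, |U ω * W ω| ∂μ := h1
      _ ≤ KU * ∫ ω, |W ω| ∂μ := by rw [← h3]; exact h2
      _ = KU * ∫ ω, ξ ω * W ω ∂μ := by rw [h4]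
  -- step D : ∫ ξ W = ∫ ξ V'
  have hξV'int : Integrable (fun ω => ξ ω * V' ω) μ := hV'int.bdd_mul hξm.aestronglyMeasurable
    (c := 1) (Filter.Eventually.of_forall fun ω => by simpa [Real.norm_eq_abs] using hξb ω)
  have hstepD : ∫ ω, ξ ω * W ω ∂μ = ∫ ω, ξ ω * V' ω ∂μ := by
    have h1 : μ[ξ * V'|mA] =ᵐ[μ] ξ * W :=
      condExp_mul_of_stronglyMeasurable_left hξmA.stronglyMeasurable (by exact hξV'int) hV'int
    calc ∫ ω, ξ ω * W ω ∂μ = ∫ ω, (ξ * W) ω ∂μ := rfl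
      _ = ∫ ω, (μ[ξ * V'|mA]) ω ∂μ := (integral_congr_ae h1).symm
      _ = ∫ ω, (ξ * V') ω ∂μ := integral_condExp hmA
      _ = ∫ ω, ξ ω * V' ω ∂μ := rfl
  -- second half, with ξ'' := ξ - ∫ ξ
  set d := ∫ ω, ξ ω ∂μ with hd
  have hξint : Integrable ξ μ := bounded_integrable (m0' := m0) hξm hξb
  set ξ'' := fun ω => ξ ω - d with hξ''
  have hξ''m : Measurable[m0] ξ'' := hξm.sub measurable_const
  have hξ''b : ∀ ω, |ξ'' ω| ≤ 1 + |d| := fun ω => by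
    calc |ξ'' ω| ≤ |ξ ω| + |d| := abs_sub _ _
      _ ≤ 1 + |d| := by linarith [hξb ω]
  have hξ''int : Integrable ξ'' μ := hξint.sub (integrable_const d)
  -- step E : ∫ ξ V' = ∫ V ξ''
  have hξVint : Integrable (fun ω => ξ ω * V ω) μ := hVint.bdd_mul hξm.aestronglyMeasurable
    (c := 1) (Filter.Eventually.of_forall fun ω => by simpa [Real.norm_eq_abs] using hξb ω)
  have hstepE : ∫ ω, ξ ω * V' ω ∂μ = ∫ ω, V ω * ξ'' ω ∂μ := by
    have h1 : ∫ ω, ξ ω * V' ω ∂μ = (∫ ω, ξ ω * V ω ∂μ) - d * c := by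
      have : ∀ ω, ξ ω * V' ω = ξ ω * V ω - ξ ω * c := fun ω => by simp [hV']; ring
      rw [integral_congr_ae (ae_of_all _ this),
        integral_sub hξVint (hξint.mul_const c), integral_mul_const]
    have h2 : ∫ ω, V ω * ξ'' ω ∂μ = (∫ ω, ξ ω * V ω ∂μ) - d * c := by
      have : ∀ ω, V ω * ξ'' ω = ξ ω * V ω - V ω * d := fun ω => by simp [hξ'']; ring
      rw [integral_congr_ae (ae_of_all _ this),
        integral_sub hξVint (hVint.mul_const d), integral_mul_const]
      ring
    rw [h1, h2]
  -- step F : ∫ V ξ'' = ∫ V W'' and bound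
  set W'' := μ[ξ''|mB] with hW''
  have hW''sm : StronglyMeasurable[mB] W'' := stronglyMeasurable_condExp
  have hW''int : Integrable W'' μ := integrable_condExp
  have hVξ''int : Integrable (V * ξ'') μ := by
    refine bounded_integrable (m0' := m0) (hVm.mul hξ''m) (Kf := KV * (1 + |d|)) fun ω => ?_
    calc |V ω * ξ'' ω| = |V ω| * |ξ'' ω| := abs_mul _ _
      _ ≤ KV * (1 + |d|) := mul_le_mul (hVb ω) (hξ''b ω) (abs_nonneg _) hKV
  have hstepF : ∫ ω, V ω * ξ'' ω ∂μ = ∫ ω, V ω * W'' ω ∂μ := by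
    have h1 : μ[V * ξ''|mB] =ᵐ[μ] V * W'' :=
      condExp_mul_of_stronglyMeasurable_left hV.stronglyMeasurable hVξ''int hξ''int
    calc ∫ ω, V ω * ξ'' ω ∂μ = ∫ ω, (V * ξ'') ω ∂μ := rfl
      _ = ∫ ω, (μ[V * ξ''|mB]) ω ∂μ := (integral_condExp hmB).symm
      _ = ∫ ω, V ω * W'' ω ∂μ := integral_congr_ae h1
  set Bset := {ω | 0 ≤ W'' ω} with hBset
  have hBsetm : MeasurableSet[mB] Bset := measurableSet_le measurable_const hW''sm.measurable
  set η := fun ω => if ω ∈ Bset then (1:ℝ) else -1 with hη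
  have hηmB : Measurable[mB] η := Measurable.ite hBsetm measurable_const measurable_const
  have hηm : Measurable[m0] η := hηmB.mono hmB le_rfl
  have hηb : ∀ ω, |η ω| ≤ 1 := fun ω => by
    by_cases h : ω ∈ Bset <;> simp [hη, h]
  have hηW'' : ∀ ω, η ω * W'' ω = |W'' ω| := fun ω => by
    by_cases h : ω ∈ Bset
    · simp only [hη, if_pos h]
      rw [one_mul, abs_of_nonneg h]
    · simp only [hη, if_neg h]
      have h' : W'' ω < 0 := lt_of_not_ge h
      rw [abs_of_neg h']; ring
  have hVW''int : Integrable (fun ω => V ω * W'' ω) μ :=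
    hW''int.bdd_mul hVm.aestronglyMeasurable
      (c := KV) (Filter.Eventually.of_forall fun ω => by simpa [Real.norm_eq_abs] using hVb ω)
  have hηW''int : Integrable (fun ω => η ω * W'' ω) μ :=
    hW''int.bdd_mul hηm.aestronglyMeasurable
      (c := 1) (Filter.Eventually.of_forall fun ω => by simpa [Real.norm_eq_abs] using hηb ω)
  have hstepB' : |∫ ω, V ω * W'' ω ∂μ| ≤ KV * ∫ ω, η ω * W'' ω ∂μ := by
    have h1 : |∫ ω, V ω * W'' ω ∂μ| ≤ ∫ ω, |V ω * W'' ω| ∂μ := by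
      simpa only [Real.norm_eq_abs] using
        norm_integral_le_integral_norm (fun ω => V ω * W'' ω) (μ := μ)
    have h2 : ∫ ω, |V ω * W'' ω| ∂μ ≤ ∫ ω, KV * |W'' ω| ∂μ := by
      refine integral_mono hVW''int.abs (hW''int.abs.const_mul KV) fun ω => ?_
      rw [abs_mul]
      exact mul_le_mul_of_nonneg_right (hVb ω) (abs_nonneg _)
    have h3 : ∫ ω, KV * |W'' ω| ∂μ = KV * ∫ ω, |W'' ω| ∂μ := integral_const_mul KV _
    have h4 : ∫ ω, |W'' ω| ∂μ = ∫ ω, η ω * W'' ω ∂μ :=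
      integral_congr_ae (ae_of_all _ fun ω => (hηW'' ω).symm)
    calc |∫ ω, V ω * W'' ω ∂μ| ≤ ∫ ω, |V ω * W'' ω| ∂μ := h1
      _ ≤ KV * ∫ ω, |W'' ω| ∂μ := by rw [← h3]; exact h2
      _ = KV * ∫ ω, η ω * W'' ω ∂μ := by rw [h4]
  -- step D' : ∫ η W'' = ∫ η ξ''
  have hηξ''int : Integrable (fun ω => η ω * ξ'' ω) μ :=
    hξ''int.bdd_mul hηm.aestronglyMeasurable
      (c := 1) (Filter.Eventually.of_forall fun ω => by simpa [Real.norm_eq_abs] using hηb ω)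
  have hstepD' : ∫ ω, η ω * W'' ω ∂μ = ∫ ω, η ω * ξ'' ω ∂μ := by
    have h1 : μ[η * ξ''|mB] =ᵐ[μ] η * W'' :=
      condExp_mul_of_stronglyMeasurable_left hηmB.stronglyMeasurable (by exact hηξ''int) hξ''int
    calc ∫ ω, η ω * W'' ω ∂μ = ∫ ω, (η * W'') ω ∂μ := rfl
      _ = ∫ ω, (μ[η * ξ''|mB]) ω ∂μ := (integral_congr_ae h1).symm
      _ = ∫ ω, η ω * ξ'' ω ∂μ := integral_condExp hmB
  -- step G/H : the indicator computation
  have hAsetm0 : MeasurableSet[m0] Aset := hmA _ hAsetm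
  have hBsetm0 : MeasurableSet[m0] Bset := hmB _ hBsetm
  set a := (μ Aset).toReal with ha
  set b := (μ Bset).toReal with hb
  set cab := (μ (Aset ∩ Bset)).toReal with hcab
  have hind : ∀ (S : Set Ω), MeasurableSet[m0] S → ∀ (e : ℝ),
      ∫ ω, S.indicator (fun _ => e) ω ∂μ = (μ S).toReal * e := fun S hS e => by
    rw [@integral_indicator_const Ω ℝ m0 _ _ _ e S hS (μ := μ)]; simp [mul_comm, Measure.real]
  have hindInt : ∀ (S : Set Ω), MeasurableSet[m0] S → ∀ e : ℝ,
      Integrable (S.indicator fun _ => e) μ := fun S hS e => by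
    refine bounded_integrable (m0' := m0) (measurable_const.indicator hS) (Kf := |e|) fun ω => ?_
    by_cases h : ω ∈ S <;> simp [Set.indicator_apply, h]
  have hξeq : ∀ ω, ξ ω = Aset.indicator (fun _ => (2:ℝ)) ω - 1 := fun ω => by
    by_cases h : ω ∈ Aset <;> simp [hξ, h, Set.indicator_apply] <;> norm_num
  have hηeq : ∀ ω, η ω = Bset.indicator (fun _ => (2:ℝ)) ω - 1 := fun ω => by
    by_cases h : ω ∈ Bset <;> simp [hη, h, Set.indicator_apply] <;> norm_num
  have hdval : d = 2 * a - 1 := by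
    rw [hd, integral_congr_ae (ae_of_all _ hξeq),
      integral_sub (hindInt _ hAsetm0 2) (integrable_const 1),
      hind Aset hAsetm0 2]
    simp [ha, mul_comm]
  have heval : ∫ ω, η ω ∂μ = 2 * b - 1 := by
    rw [integral_congr_ae (ae_of_all _ hηeq),
      integral_sub (hindInt _ hBsetm0 2) (integrable_const 1),
      hind Bset hBsetm0 2]
    simp [hb, mul_comm]
  have hηξeq : ∀ ω, η ω * ξ ω = (Aset ∩ Bset).indicator (fun _ => (4:ℝ)) ω
      - Aset.indicator (fun _ => (2:ℝ)) ω - Bset.indicator (fun _ => (2:ℝ)) ω + 1 := fun ω => by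
    by_cases hA' : ω ∈ Aset <;> by_cases hB' : ω ∈ Bset <;>
      simp [hξ, hη, hA', hB', Set.indicator_apply, Set.mem_inter_iff] <;> norm_num
  have hηξint : Integrable (fun ω => η ω * ξ ω) μ :=
    hξint.bdd_mul hηm.aestronglyMeasurable
      (c := 1) (Filter.Eventually.of_forall fun ω => by simpa [Real.norm_eq_abs] using hηb ω)
  have hηξval : ∫ ω, η ω * ξ ω ∂μ = 4 * cab - 2 * a - 2 * b + 1 := by
    have I2 : Integrable (fun ω => (Aset ∩ Bset).indicator (fun _ => (4:ℝ)) ω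
        - Aset.indicator (fun _ => (2:ℝ)) ω) μ :=
      (hindInt _ (hAsetm0.inter hBsetm0) 4).sub (hindInt _ hAsetm0 2)
    have I1 : Integrable (fun ω => (Aset ∩ Bset).indicator (fun _ => (4:ℝ)) ω
        - Aset.indicator (fun _ => (2:ℝ)) ω - Bset.indicator (fun _ => (2:ℝ)) ω) μ :=
      I2.sub (hindInt _ hBsetm0 2)
    rw [integral_congr_ae (ae_of_all _ hηξeq), integral_add I1 (integrable_const 1),
      integral_sub I2 (hindInt _ hBsetm0 2),
      integral_sub (hindInt _ (hAsetm0.inter hBsetm0) 4) (hindInt _ hAsetm0 2),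
      hind _ (hAsetm0.inter hBsetm0) 4, hind _ hAsetm0 2, hind _ hBsetm0 2, integral_const]
    simp [ha, hb, hcab]
    ring
  have hstepH : ∫ ω, η ω * ξ'' ω ∂μ = 4 * (cab - a * b) := by
    have h1 : ∀ ω, η ω * ξ'' ω = η ω * ξ ω - η ω * d := fun ω => by simp [hξ'']; ring
    rw [integral_congr_ae (ae_of_all _ h1), integral_sub hηξint ((bounded_integrable (m0' := m0) hηm hηb).mul_const d), hηξval,
      integral_mul_const, heval, hdval]
    ring
  have hαbound : |4 * (cab - a * b)| ≤ 4 * α := by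
    have h := hα Aset Bset hAsetm hBsetm
    rw [abs_mul, abs_of_nonneg (by norm_num : (0:ℝ) ≤ 4)]
    have : |cab - a * b| ≤ α := h
    linarith
  -- assemble
  have hfinal2 : ∫ ω, ξ ω * V' ω ∂μ ≤ KV * (4 * α) := by
    have e1 : ∫ ω, ξ ω * V' ω ∂μ = ∫ ω, V ω * W'' ω ∂μ := by rw [hstepE, hstepF]
    have e2 : ∫ ω, η ω * W'' ω ∂μ ≤ 4 * α := by
      rw [hstepD', hstepH]
      calc 4 * (cab - a * b) ≤ |4 * (cab - a * b)| := le_abs_self _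
        _ ≤ 4 * α := hαbound
    calc ∫ ω, ξ ω * V' ω ∂μ ≤ |∫ ω, V ω * W'' ω ∂μ| := by rw [e1]; exact le_abs_self _
      _ ≤ KV * ∫ ω, η ω * W'' ω ∂μ := hstepB'
      _ ≤ KV * (4 * α) := mul_le_mul_of_nonneg_left e2 hKV
  have hlhs : (∫ ω, U ω * V ω ∂μ) - (∫ ω, U ω ∂μ) * ∫ ω, V ω ∂μ = ∫ ω, U ω * V' ω ∂μ := by
    have : ∀ ω, U ω * V' ω = U ω * V ω - U ω * c := fun ω => by simp [hV']; ring
    rw [integral_congr_ae (ae_of_all _ this),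
      integral_sub (f := fun ω => U ω * V ω) (bounded_integrable (m0' := m0) (hUm.mul hVm) (Kf := KU * KV) fun ω => by
        rw [abs_mul]; exact mul_le_mul (hUb ω) (hVb ω) (abs_nonneg _) hKU)
      (hUint.mul_const c), integral_mul_const]
  rw [hlhs, hstepA]
  calc |∫ ω, U ω * W ω ∂μ| ≤ KU * ∫ ω, ξ ω * W ω ∂μ := hstepB
    _ = KU * ∫ ω, ξ ω * V' ω ∂μ := by rw [hstepD]
    _ ≤ KU * (KV * (4 * α)) := mul_le_mul_of_nonneg_left hfinal2 hKU
    _ = 4 * KU * KV * α := by ring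

end Cov

section Main

variable {Ω : Type*} [MeasureSpace Ω] [IsProbabilityMeasure (ℙ : Measure Ω)]

lemma meas_past (Y : ℕ → Ω → ℝ) {a n : ℕ} (ha : a ∈ Set.Icc 1 n) :
    Measurable[⨆ i ∈ Set.Icc 1 n, MeasurableSpace.comap (Y i) inferInstance] (Y a) :=
  (comap_measurable (Y a)).mono
    (le_biSup (fun i => MeasurableSpace.comap (Y i) inferInstance) ha) le_rfl

lemma meas_fut (Y : ℕ → Ω → ℝ) {a n k : ℕ} (ha : a ∈ Set.Ici (n + k)) :
    Measurable[⨆ i ∈ Set.Ici (n + k), MeasurableSpace.comap (Y i) inferInstance] (Y a) :=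
  (comap_measurable (Y a)).mono
    (le_biSup (fun i => MeasurableSpace.comap (Y i) inferInstance) ha) le_rfl

lemma cov_bound_alpha (Y : ℕ → Ω → ℝ) (hmeas : ∀ i, Measurable (Y i)) (n k : ℕ)
    (U V : Ω → ℝ) (KU KV : ℝ)
    (hU : Measurable[⨆ i ∈ Set.Icc 1 n, MeasurableSpace.comap (Y i) inferInstance] U)
    (hV : Measurable[⨆ i ∈ Set.Ici (n + k), MeasurableSpace.comap (Y i) inferInstance] V)
    (hUb : ∀ ω, |U ω| ≤ KU) (hVb : ∀ ω, |V ω| ≤ KV) :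
    |(∫ ω, U ω * V ω ∂ℙ) - (∫ ω, U ω ∂ℙ) * ∫ ω, V ω ∂ℙ|
      ≤ 4 * KU * KV * alphaMix Y k := by
  refine cov_bound_gen (ℙ : Measure Ω) _ _ ?_ ?_ (alphaMix Y k)
    (fun A B hA hB => abs_cov_le_alphaMix Y k n hA hB) U V KU KV hU hV hUb hVb
  · exact iSup₂_le fun i _ => measurable_iff_comap_le.mp (hmeas i)
  · exact iSup₂_le fun i _ => measurable_iff_comap_le.mp (hmeas i)

lemma interp3 {x a b θ : ℝ} (hx : 0 ≤ x) (ha : x ≤ a) (hb : x ≤ b)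
    (hθ0 : 0 ≤ θ) (hθ1 : θ ≤ 1) : x ≤ a ^ θ * b ^ (1 - θ) := by
  rcases eq_or_lt_of_le hx with h0 | hxpos
  · rw [← h0]
    exact mul_nonneg (Real.rpow_nonneg (hx.trans ha) θ) (Real.rpow_nonneg (hx.trans hb) _)
  · have hxx : x = x ^ θ * x ^ (1 - θ) := by
      rw [← Real.rpow_add hxpos]
      norm_num
    rw [hxx]
    exact mul_le_mul (Real.rpow_le_rpow hx ha hθ0) (Real.rpow_le_rpow hx hb (by linarith))
      (Real.rpow_nonneg hx _) (Real.rpow_nonneg (hx.trans ha) _)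

lemma shift_integral (Y : ℕ → Ω → ℝ) (hmeas : ∀ i, Measurable (Y i)) (hstat : Stationary Y)
    (s : ℕ) (F : (ℕ → ℝ) → ℝ) (hF : Measurable F) :
    ∫ ω, F (fun l => Y (l + s) ω) ∂ℙ = ∫ ω, F (fun l => Y l ω) ∂ℙ := by
  have h1 : Measurable (fun ω (l : ℕ) => Y (l + s) ω) :=
    measurable_pi_lambda _ fun l => hmeas _
  have h2 : Measurable (fun ω (l : ℕ) => Y l ω) :=
    measurable_pi_lambda _ fun l => hmeas _
  rw [← integral_map h1.aemeasurable hF.aestronglyMeasurable,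
    ← integral_map h2.aemeasurable hF.aestronglyMeasurable, hstat s]

lemma abs_moment_invariant (Y : ℕ → Ω → ℝ) (hmeas : ∀ i, Measurable (Y i))
    (hstat : Stationary Y) (n : ℕ) (hn : 1 ≤ n) :
    ∫ ω, |Y n ω| ∂ℙ = ∫ ω, |Y 1 ω| ∂ℙ := by
  have h := shift_integral Y hmeas hstat (n - 1) (fun p => |p 1|)
    ((measurable_pi_apply 1).abs)
  have hn' : 1 + (n - 1) = n := by omega
  conv_lhs => rw [← hn']
  exact h

end Main

section Final

variable {Ω' : Type*} [MeasureSpace Ω'] [IsProbabilityMeasure (ℙ : Measure Ω')]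

lemma abs_integral_le' (f g : Ω' → ℝ) (hf : Measurable f) (hg : Integrable g ℙ)
    (h : ∀ ω, |f ω| ≤ g ω) : |∫ ω, f ω ∂ℙ| ≤ ∫ ω, g ω ∂ℙ := by
  have hfint : Integrable f ℙ := hg.mono' hf.aestronglyMeasurable
    (ae_of_all _ fun ω => by simpa [Real.norm_eq_abs] using h ω)
  calc |∫ ω, f ω ∂ℙ| ≤ ∫ ω, |f ω| ∂ℙ := by
        simpa only [Real.norm_eq_abs] using norm_integral_le_integral_norm f (μ := ℙ)
    _ ≤ ∫ ω, g ω ∂ℙ := integral_mono hfint.abs hg fun ω => h ω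


end Final

/-- Fourth-order covariance bound for stationary, bounded, centered random
variables from a strongly mixing sequence with `α(n) = O(n^{−β})`, `β > 3`. -/
theorem fourth_covariance_bound_strong_mixing
    {Ω : Type*} [MeasureSpace Ω] [IsProbabilityMeasure (ℙ : Measure Ω)]
    (Y : ℕ → Ω → ℝ) (hmeas : ∀ i, Measurable (Y i)) (hstat : Stationary Y)
    (K : ℝ) (hbdd : ∀ n ω, |Y n ω| ≤ K)
    (hcent : ∀ n, ∫ ω, Y n ω ∂ℙ = 0)
    (β : ℝ) (hβ : 3 < β)
    (hmix : (fun n => alphaMix Y n) =O[atTop] fun n : ℕ => (n : ℝ) ^ (-β)) :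
    ∃ C : ℝ, 0 < C ∧ ∀ i j k : ℕ, 1 ≤ i → 1 ≤ j → 1 ≤ k →
      |∫ ω, Y 0 ω * Y i ω * Y (i + j) ω * Y (i + j + k) ω ∂ℙ|
        ≤ C * (alphaMix Y i) ^ ((1 : ℝ) / β) * (alphaMix Y k) ^ ((1 : ℝ) / β)
            * (∫ ω, |Y 1 ω| ∂ℙ) ^ ((2 * β - 2) / β)
          + C * (alphaMix Y (max i (max j k))) ^ ((3 : ℝ) / β)
            * (∫ ω, |Y 1 ω| ∂ℙ) ^ ((β - 3) / β) := by
  -- Ω is nonempty, so K ≥ 0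
  have hΩ : Nonempty Ω := by
    by_contra h
    rw [not_nonempty_iff] at h
    have h1 : (ℙ : Measure Ω) Set.univ = 1 := measure_univ
    rw [Set.univ_eq_empty_iff.mpr h, measure_empty] at h1
    exact zero_ne_one h1
  obtain ⟨ω₀⟩ := hΩ
  have hK0 : 0 ≤ K := (abs_nonneg _).trans (hbdd 0 ω₀)
  have hβ0 : (0:ℝ) < β := by linarith
  have hβne : β ≠ 0 := ne_of_gt hβ0
  set m := ∫ ω, |Y 1 ω| ∂ℙ with hmdef
  have hm0 : 0 ≤ m := integral_nonneg fun ω => abs_nonneg _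
  -- the constants
  set A1 := (4*K^2) ^ ((1:ℝ)/β) * K ^ (1 - 1/β) with hA1def
  set A2 := (4*K^4) ^ ((3:ℝ)/β) * (2*K^3) ^ (1 - 3/β) with hA2def
  have hA1 : 0 ≤ A1 := mul_nonneg (Real.rpow_nonneg (by positivity) _) (Real.rpow_nonneg hK0 _)
  have hA2 : 0 ≤ A2 := mul_nonneg (Real.rpow_nonneg (by positivity) _)
    (Real.rpow_nonneg (by positivity) _)
  have hCpos : (0:ℝ) < A1^2 + A2 + 1 := by nlinarith [sq_nonneg A1]
  refine ⟨A1^2 + A2 + 1, hCpos, ?_⟩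
  intro i j k hi hj hk
  set C := A1^2 + A2 + 1 with hCdef
  have hA1C : A1^2 ≤ C := by nlinarith
  have hA2C : A2 ≤ C := by nlinarith
  -- exponent facts
  have hθ30 : 0 ≤ (3:ℝ)/β := by positivity
  have hθ31 : (3:ℝ)/β ≤ 1 := by rw [div_le_one hβ0]; linarith
  have hθ10 : 0 ≤ (1:ℝ)/β := by positivity
  have hθ11 : (1:ℝ)/β ≤ 1 := by rw [div_le_one hβ0]; linarith
  have hm3 : m ^ ((β-3)/β) = m ^ (1 - 3/β) := by
    congr 1
    field_simp
  have hm2 : m ^ ((2*β-2)/β) = m ^ (1 - 1/β) * m ^ (1 - 1/β) := by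
    have hne : (1 - 1/β) + (1 - 1/β) ≠ 0 := by
      have h1 : (1:ℝ)/β < 1 := by rw [div_lt_one hβ0]; linarith
      intro hcon
      nlinarith
    rw [← Real.rpow_add' hm0 hne]
    congr 1
    field_simp
    ring
  -- stationarity shift
  have hF : Measurable (fun p : ℕ → ℝ => p 0 * p i * p (i+j) * p (i+j+k)) :=
    (((measurable_pi_apply 0).mul (measurable_pi_apply i)).mul
      (measurable_pi_apply (i+j))).mul (measurable_pi_apply (i+j+k))
  have hshift : (∫ ω, Y 0 ω * Y i ω * Y (i + j) ω * Y (i + j + k) ω ∂ℙ)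
      = ∫ ω, Y 1 ω * Y (i+1) ω * Y (i+j+1) ω * Y (i+j+k+1) ω ∂ℙ :=
    (shift_integral Y hmeas hstat 1 (fun p => p 0 * p i * p (i+j) * p (i+j+k)) hF).symm
  set E4 := ∫ ω, Y 1 ω * Y (i+1) ω * Y (i+j+1) ω * Y (i+j+k+1) ω ∂ℙ with hE4def
  set P1 := ∫ ω, Y 1 ω * Y (i+1) ω ∂ℙ with hP1def
  set P2 := ∫ ω, Y (i+j+1) ω * Y (i+j+k+1) ω ∂ℙ with hP2def
  -- basic product bounds
  have habs4 : ∀ ω, |Y 1 ω * Y (i+1) ω * Y (i+j+1) ω * Y (i+j+k+1) ω| ≤ K^3 * |Y 1 ω| := by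
    intro ω
    rw [abs_mul, abs_mul, abs_mul]
    calc |Y 1 ω| * |Y (i+1) ω| * |Y (i+j+1) ω| * |Y (i+j+k+1) ω|
        ≤ |Y 1 ω| * K * K * K := by
          refine mul_le_mul (mul_le_mul (mul_le_mul_of_nonneg_left (hbdd _ ω) (abs_nonneg _))
            (hbdd _ ω) (abs_nonneg _) (mul_nonneg (abs_nonneg _) hK0)) (hbdd _ ω)
            (abs_nonneg _) (mul_nonneg (mul_nonneg (abs_nonneg _) hK0) hK0)
      _ = K^3 * |Y 1 ω| := by ring
  have hKm_int : Integrable (fun ω => K^3 * |Y 1 ω|) ℙ :=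
    ((bounded_integrable (hmeas 1) (hbdd 1)).abs).const_mul _
  have hE4K : |E4| ≤ K^3 * m := by
    have h := abs_integral_le' _ _
      ((((hmeas 1).mul (hmeas (i+1))).mul (hmeas (i+j+1))).mul (hmeas (i+j+k+1)))
      hKm_int habs4
    rw [integral_const_mul] at h
    exact h
  -- pair bounds
  have hP1K : |P1| ≤ K * m := by
    have h := abs_integral_le' (fun ω => Y 1 ω * Y (i+1) ω) (fun ω => K * |Y 1 ω|)
      ((hmeas 1).mul (hmeas (i+1)))
      (((bounded_integrable (hmeas 1) (hbdd 1)).abs).const_mul _) (fun ω => by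
        rw [abs_mul]
        calc |Y 1 ω| * |Y (i+1) ω| ≤ |Y 1 ω| * K :=
              mul_le_mul_of_nonneg_left (hbdd _ ω) (abs_nonneg _)
          _ = K * |Y 1 ω| := mul_comm _ _)
    rw [integral_const_mul] at h
    exact h
  have hP2K : |P2| ≤ K * m := by
    have h := abs_integral_le' (fun ω => Y (i+j+1) ω * Y (i+j+k+1) ω)
      (fun ω => K * |Y (i+j+1) ω|)
      ((hmeas (i+j+1)).mul (hmeas (i+j+k+1)))
      (((bounded_integrable (hmeas (i+j+1)) (hbdd (i+j+1))).abs).const_mul _) (fun ω => by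
        rw [abs_mul]
        calc |Y (i+j+1) ω| * |Y (i+j+k+1) ω| ≤ |Y (i+j+1) ω| * K :=
              mul_le_mul_of_nonneg_left (hbdd _ ω) (abs_nonneg _)
          _ = K * |Y (i+j+1) ω| := mul_comm _ _)
    rw [integral_const_mul, abs_moment_invariant Y hmeas hstat (i+j+1) (by omega)] at h
    exact h
  have hP1α : |P1| ≤ 4 * K * K * alphaMix Y i := by
    have h := cov_bound_alpha Y hmeas 1 i (Y 1) (Y (i+1)) K K
      (meas_past Y (by simp : (1:ℕ) ∈ Set.Icc 1 1))
      (meas_fut Y (by simp only [Set.mem_Ici]; omega : i+1 ∈ Set.Ici (1+i)))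
      (hbdd 1) (hbdd (i+1))
    rw [hcent 1, zero_mul, sub_zero] at h
    exact h
  have hP2α : |P2| ≤ 4 * K * K * alphaMix Y k := by
    have h := cov_bound_alpha Y hmeas (i+j+1) k (Y (i+j+1)) (Y (i+j+k+1)) K K
      (meas_past Y (by simp only [Set.mem_Icc]; omega : i+j+1 ∈ Set.Icc 1 (i+j+1)))
      (meas_fut Y (by simp only [Set.mem_Ici]; omega : i+j+k+1 ∈ Set.Ici (i+j+1+k)))
      (hbdd (i+j+1)) (hbdd (i+j+k+1))
    rw [hcent (i+j+1), zero_mul, sub_zero] at h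
    exact h
  -- interpolated pair bounds
  have hαi0 := alphaMix_nonneg Y i
  have hαj0 := alphaMix_nonneg Y j
  have hαk0 := alphaMix_nonneg Y k
  have hpair : ∀ (P : ℝ) (a : ℕ), |P| ≤ 4 * K * K * alphaMix Y a → |P| ≤ K * m →
      |P| ≤ A1 * ((alphaMix Y a) ^ ((1:ℝ)/β) * m ^ (1 - 1/β)) := by
    intro P a h1 h2
    have h3 := interp3 (abs_nonneg P) h1 h2 hθ10 hθ11
    have h4 : (4 * K * K * alphaMix Y a) ^ ((1:ℝ)/β)
        = (4*K^2) ^ ((1:ℝ)/β) * (alphaMix Y a) ^ ((1:ℝ)/β) := by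
      rw [show 4 * K * K * alphaMix Y a = (4*K^2) * alphaMix Y a by ring,
        Real.mul_rpow (by positivity) (alphaMix_nonneg Y a)]
    have h5 : (K * m) ^ (1 - 1/β) = K ^ (1 - 1/β) * m ^ (1 - 1/β) :=
      Real.mul_rpow hK0 hm0
    calc |P| ≤ (4 * K * K * alphaMix Y a) ^ ((1:ℝ)/β) * (K * m) ^ (1 - 1/β) := h3
      _ = A1 * ((alphaMix Y a) ^ ((1:ℝ)/β) * m ^ (1 - 1/β)) := by
          rw [h4, h5, hA1def]; ring
  have hP1i := hpair P1 i hP1α hP1K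
  have hP2i := hpair P2 k hP2α hP2K
  have hprod : |P1 * P2| ≤ A1^2 * ((alphaMix Y i) ^ ((1:ℝ)/β) * (alphaMix Y k) ^ ((1:ℝ)/β)
      * m ^ ((2*β-2)/β)) := by
    rw [abs_mul, hm2]
    calc |P1| * |P2| ≤ (A1 * ((alphaMix Y i) ^ ((1:ℝ)/β) * m ^ (1 - 1/β)))
        * (A1 * ((alphaMix Y k) ^ ((1:ℝ)/β) * m ^ (1 - 1/β))) :=
          mul_le_mul hP1i hP2i (abs_nonneg _)
            (mul_nonneg hA1 (mul_nonneg (Real.rpow_nonneg hαi0 _) (Real.rpow_nonneg hm0 _)))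
      _ = A1^2 * ((alphaMix Y i) ^ ((1:ℝ)/β) * (alphaMix Y k) ^ ((1:ℝ)/β)
          * (m ^ (1 - 1/β) * m ^ (1 - 1/β))) := by ring
  -- interpolation for the main covariance term
  have hmain : ∀ (X : ℝ) (a : ℕ), |X| ≤ 4 * K^4 * alphaMix Y a → |X| ≤ 2 * K^3 * m →
      |X| ≤ A2 * ((alphaMix Y a) ^ ((3:ℝ)/β) * m ^ ((β-3)/β)) := by
    intro X a h1 h2
    have h3 := interp3 (abs_nonneg X) h1 h2 hθ30 hθ31
    have h4 : (4 * K^4 * alphaMix Y a) ^ ((3:ℝ)/β)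
        = (4*K^4) ^ ((3:ℝ)/β) * (alphaMix Y a) ^ ((3:ℝ)/β) :=
      Real.mul_rpow (by positivity) (alphaMix_nonneg Y a)
    have h5 : (2 * K^3 * m) ^ (1 - 3/β) = (2*K^3) ^ (1 - 3/β) * m ^ (1 - 3/β) :=
      Real.mul_rpow (by positivity) hm0
    calc |X| ≤ (4 * K^4 * alphaMix Y a) ^ ((3:ℝ)/β) * (2 * K^3 * m) ^ (1 - 3/β) := h3
      _ = A2 * ((alphaMix Y a) ^ ((3:ℝ)/β) * m ^ (1 - 3/β)) := by
          rw [h4, h5, hA2def]; ring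
      _ = A2 * ((alphaMix Y a) ^ ((3:ℝ)/β) * m ^ ((β-3)/β)) := by rw [hm3]
  -- nonnegativity of the two RHS terms
  have hterm1 : 0 ≤ C * (alphaMix Y i) ^ ((1:ℝ)/β) * (alphaMix Y k) ^ ((1:ℝ)/β)
      * m ^ ((2*β-2)/β) :=
    mul_nonneg (mul_nonneg (mul_nonneg hCpos.le (Real.rpow_nonneg hαi0 _))
      (Real.rpow_nonneg hαk0 _)) (Real.rpow_nonneg hm0 _)
  rw [hshift]
  -- case analysis on the maximum
  have hcase : max i (max j k) = i ∨ max i (max j k) = j ∨ max i (max j k) = k := by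
    rcases max_cases i (max j k) with ⟨h1, _⟩ | ⟨h1, _⟩
    · exact Or.inl h1
    · rcases max_cases j k with ⟨h2, _⟩ | ⟨h2, _⟩
      · exact Or.inr (Or.inl (by rw [h1, h2]))
      · exact Or.inr (Or.inr (by rw [h1, h2]))
  have hterm2C : ∀ a : ℕ, A2 * ((alphaMix Y a) ^ ((3:ℝ)/β) * m ^ ((β-3)/β))
      ≤ C * (alphaMix Y a) ^ ((3:ℝ)/β) * m ^ ((β-3)/β) := by
    intro a
    rw [← mul_assoc]
    refine mul_le_mul_of_nonneg_right ?_ (Real.rpow_nonneg hm0 _)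
    exact mul_le_mul_of_nonneg_right hA2C (Real.rpow_nonneg (alphaMix_nonneg Y a) _)
  rcases hcase with hM | hM | hM
  all_goals rw [hM]
  -- Case max = i
  · have hV : Measurable[⨆ l ∈ Set.Ici (1 + i), MeasurableSpace.comap (Y l) inferInstance]
        (fun ω => Y (i+1) ω * Y (i+j+1) ω * Y (i+j+k+1) ω) :=
      ((meas_fut Y (by simp only [Set.mem_Ici]; omega)).mul
        (meas_fut Y (by simp only [Set.mem_Ici]; omega))).mul
        (meas_fut Y (by simp only [Set.mem_Ici]; omega))
    have hVb : ∀ ω, |Y (i+1) ω * Y (i+j+1) ω * Y (i+j+k+1) ω| ≤ K^3 := by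
      intro ω
      rw [abs_mul, abs_mul]
      calc |Y (i+1) ω| * |Y (i+j+1) ω| * |Y (i+j+k+1) ω| ≤ K * K * K := by
            refine mul_le_mul (mul_le_mul (hbdd _ ω) (hbdd _ ω) (abs_nonneg _) hK0)
              (hbdd _ ω) (abs_nonneg _) (mul_nonneg hK0 hK0)
        _ = K^3 := by ring
    have hcov := cov_bound_alpha Y hmeas 1 i (Y 1)
      (fun ω => Y (i+1) ω * Y (i+j+1) ω * Y (i+j+k+1) ω) K (K^3)
      (meas_past Y (by simp : (1:ℕ) ∈ Set.Icc 1 1)) hV (hbdd 1) hVb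
    rw [hcent 1, zero_mul, sub_zero] at hcov
    have heq : ∫ ω, Y 1 ω * (Y (i+1) ω * Y (i+j+1) ω * Y (i+j+k+1) ω) ∂ℙ = E4 := by
      rw [hE4def]
      exact integral_congr_ae (ae_of_all _ fun ω => by ring)
    rw [heq] at hcov
    have h1 : |E4| ≤ 4 * K^4 * alphaMix Y i := by
      calc |E4| ≤ 4 * K * K^3 * alphaMix Y i := hcov
        _ = 4 * K^4 * alphaMix Y i := by ring
    have h2 : |E4| ≤ 2 * K^3 * m := by
      have h0 : 0 ≤ K^3 * m := mul_nonneg (pow_nonneg hK0 3) hm0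
      linarith
    have h3 := (hmain E4 i h1 h2).trans (hterm2C i)
    calc |E4| ≤ C * (alphaMix Y i) ^ ((3:ℝ)/β) * m ^ ((β-3)/β) := h3
      _ ≤ C * (alphaMix Y i) ^ ((1:ℝ)/β) * (alphaMix Y k) ^ ((1:ℝ)/β) * m ^ ((2*β-2)/β)
          + C * (alphaMix Y i) ^ ((3:ℝ)/β) * m ^ ((β-3)/β) := le_add_of_nonneg_left hterm1
  -- Case max = j
  · have hU : Measurable[⨆ l ∈ Set.Icc 1 (i+1), MeasurableSpace.comap (Y l) inferInstance]
        (fun ω => Y 1 ω * Y (i+1) ω) :=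
      (meas_past Y (by simp only [Set.mem_Icc]; omega)).mul
        (meas_past Y (by simp only [Set.mem_Icc]; omega : i+1 ∈ Set.Icc 1 (i+1)))
    have hV : Measurable[⨆ l ∈ Set.Ici ((i+1) + j), MeasurableSpace.comap (Y l) inferInstance]
        (fun ω => Y (i+j+1) ω * Y (i+j+k+1) ω) :=
      (meas_fut Y (by simp only [Set.mem_Ici]; omega)).mul
        (meas_fut Y (by simp only [Set.mem_Ici]; omega))
    have hUb : ∀ ω, |Y 1 ω * Y (i+1) ω| ≤ K^2 := by
      intro ω
      rw [abs_mul]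
      calc |Y 1 ω| * |Y (i+1) ω| ≤ K * K :=
            mul_le_mul (hbdd _ ω) (hbdd _ ω) (abs_nonneg _) hK0
        _ = K^2 := by ring
    have hVb : ∀ ω, |Y (i+j+1) ω * Y (i+j+k+1) ω| ≤ K^2 := by
      intro ω
      rw [abs_mul]
      calc |Y (i+j+1) ω| * |Y (i+j+k+1) ω| ≤ K * K :=
            mul_le_mul (hbdd _ ω) (hbdd _ ω) (abs_nonneg _) hK0
        _ = K^2 := by ring
    have hcov := cov_bound_alpha Y hmeas (i+1) j (fun ω => Y 1 ω * Y (i+1) ω)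
      (fun ω => Y (i+j+1) ω * Y (i+j+k+1) ω) (K^2) (K^2) hU hV hUb hVb
    have heq : ∫ ω, (Y 1 ω * Y (i+1) ω) * (Y (i+j+1) ω * Y (i+j+k+1) ω) ∂ℙ = E4 := by
      rw [hE4def]
      exact integral_congr_ae (ae_of_all _ fun ω => by ring)
    rw [heq] at hcov
    have h1 : |E4 - P1 * P2| ≤ 4 * K^4 * alphaMix Y j := by
      calc |E4 - P1 * P2| ≤ 4 * K^2 * K^2 * alphaMix Y j := hcov
        _ = 4 * K^4 * alphaMix Y j := by ring
    have hP2K2 : |P2| ≤ K^2 := by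
      have h := abs_integral_le' (fun ω => Y (i+j+1) ω * Y (i+j+k+1) ω) (fun _ => K^2)
        ((hmeas (i+j+1)).mul (hmeas (i+j+k+1))) (integrable_const _) hVb
      rw [integral_const] at h
      simpa using h
    have h2 : |E4 - P1 * P2| ≤ 2 * K^3 * m := by
      have hPP : |P1 * P2| ≤ K^3 * m := by
        rw [abs_mul]
        calc |P1| * |P2| ≤ (K * m) * K^2 :=
              mul_le_mul hP1K hP2K2 (abs_nonneg _) (mul_nonneg hK0 hm0)
          _ = K^3 * m := by ring
      calc |E4 - P1 * P2| ≤ |E4| + |P1 * P2| := abs_sub _ _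
        _ ≤ K^3 * m + K^3 * m := add_le_add hE4K hPP
        _ = 2 * K^3 * m := by ring
    have h3 := (hmain _ j h1 h2).trans (hterm2C j)
    have hprodC : |P1 * P2| ≤ C * (alphaMix Y i) ^ ((1:ℝ)/β) * (alphaMix Y k) ^ ((1:ℝ)/β)
        * m ^ ((2*β-2)/β) := by
      calc |P1 * P2| ≤ A1^2 * ((alphaMix Y i) ^ ((1:ℝ)/β) * (alphaMix Y k) ^ ((1:ℝ)/β)
          * m ^ ((2*β-2)/β)) := hprod
        _ ≤ C * ((alphaMix Y i) ^ ((1:ℝ)/β) * (alphaMix Y k) ^ ((1:ℝ)/β)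
            * m ^ ((2*β-2)/β)) :=
          mul_le_mul_of_nonneg_right hA1C (mul_nonneg (mul_nonneg
            (Real.rpow_nonneg hαi0 _) (Real.rpow_nonneg hαk0 _)) (Real.rpow_nonneg hm0 _))
        _ = C * (alphaMix Y i) ^ ((1:ℝ)/β) * (alphaMix Y k) ^ ((1:ℝ)/β)
            * m ^ ((2*β-2)/β) := by ring
    calc |E4| = |P1 * P2 + (E4 - P1 * P2)| := by congr 1; ring
      _ ≤ |P1 * P2| + |E4 - P1 * P2| := abs_add_le _ _
      _ ≤ (C * (alphaMix Y i) ^ ((1:ℝ)/β) * (alphaMix Y k) ^ ((1:ℝ)/β) * m ^ ((2*β-2)/β))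
          + C * (alphaMix Y j) ^ ((3:ℝ)/β) * m ^ ((β-3)/β) := add_le_add hprodC h3
  -- Case max = k
  · have hU : Measurable[⨆ l ∈ Set.Icc 1 (i+j+1), MeasurableSpace.comap (Y l) inferInstance]
        (fun ω => Y 1 ω * Y (i+1) ω * Y (i+j+1) ω) :=
      ((meas_past Y (by simp only [Set.mem_Icc]; omega)).mul
        (meas_past Y (by simp only [Set.mem_Icc]; omega))).mul
        (meas_past Y (by simp only [Set.mem_Icc]; omega))
    have hUb : ∀ ω, |Y 1 ω * Y (i+1) ω * Y (i+j+1) ω| ≤ K^3 := by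
      intro ω
      rw [abs_mul, abs_mul]
      calc |Y 1 ω| * |Y (i+1) ω| * |Y (i+j+1) ω| ≤ K * K * K := by
            refine mul_le_mul (mul_le_mul (hbdd _ ω) (hbdd _ ω) (abs_nonneg _) hK0)
              (hbdd _ ω) (abs_nonneg _) (mul_nonneg hK0 hK0)
        _ = K^3 := by ring
    have hcov := cov_bound_alpha Y hmeas (i+j+1) k
      (fun ω => Y 1 ω * Y (i+1) ω * Y (i+j+1) ω) (Y (i+j+k+1)) (K^3) K hU
      (meas_fut Y (by simp only [Set.mem_Ici]; omega)) hUb (hbdd (i+j+k+1))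
    rw [hcent (i+j+k+1), mul_zero, sub_zero] at hcov
    have heq : ∫ ω, (Y 1 ω * Y (i+1) ω * Y (i+j+1) ω) * Y (i+j+k+1) ω ∂ℙ = E4 := by
      rw [hE4def]
    rw [heq] at hcov
    have h1 : |E4| ≤ 4 * K^4 * alphaMix Y k := by
      calc |E4| ≤ 4 * K^3 * K * alphaMix Y k := hcov
        _ = 4 * K^4 * alphaMix Y k := by ring
    have h2 : |E4| ≤ 2 * K^3 * m := by
      have h0 : 0 ≤ K^3 * m := mul_nonneg (pow_nonneg hK0 3) hm0
      linarith
    have h3 := (hmain E4 k h1 h2).trans (hterm2C k)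
    calc |E4| ≤ C * (alphaMix Y k) ^ ((3:ℝ)/β) * m ^ ((β-3)/β) := h3
      _ ≤ C * (alphaMix Y i) ^ ((1:ℝ)/β) * (alphaMix Y k) ^ ((1:ℝ)/β) * m ^ ((2*β-2)/β)
          + C * (alphaMix Y k) ^ ((3:ℝ)/β) * m ^ ((β-3)/β) := le_add_of_nonneg_left hterm1
end
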